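/- The matrix inversion part of the (f,g)-inversion: if f(x,a)g(b,c) + f(x,b)g(c,a) + f(x,c)g(a,b) = 0 for all a,b,c,x and g is antisymmetric, then the lower triangular matrices B_{n,k} = ∏_{i=k}^{n-1} f(x_i,b_k) / ∏_{i=k+1}^{n} g(b_i,b_k) and C_{n,k} = (f(x_k,b_k)/f(x_n,b_n)) · ∏_{i=k+1}^{n} f(x_i,b_n) / ∏_{i=k}^{n-1} g(b_i,b_n) satisfy Σ_{k ≤ i ≤ n} C_{n,i} B_{i,k} = δ_{n,k} for all n ≥ k ≥ 0. -/

import Mathlib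

private noncomputable def fgE (f g : ℂ → ℂ → ℂ) (b xs : ℕ → ℂ) (n k : ℕ) (i : ℕ) : ℂ :=
  f (xs i) (b k) * g (b i) (b n) / f (xs n) (b n) *
    (∏ j ∈ Finset.Icc (i + 1) n, f (xs j) (b n)) /
    (∏ j ∈ Finset.Ico i n, g (b j) (b n)) *
    ((∏ j ∈ Finset.Ico k i, f (xs j) (b k)) /
      ∏ j ∈ Finset.Icc (k + 1) i, g (b j) (b k))

private lemma fg_step (f g : ℂ → ℂ → ℂ)
    (hganti : ∀ x y, g x y = - g y x)
    (hfg : ∀ a b c x, f x a * g b c + f x b * g c a + f x c * g a b = 0)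
    (b xs : ℕ → ℂ)
    (hg : ∀ i j, i ≠ j → g (b i) (b j) ≠ 0)
    (hf : ∀ n, f (xs n) (b n) ≠ 0)
    (n k i : ℕ) (hki : k ≤ i) (hin : i < n) :
    (f (xs (i + 1)) (b (i + 1)) / f (xs n) (b n) *
        (∏ j ∈ Finset.Icc (i + 1 + 1) n, f (xs j) (b n)) /
        ∏ j ∈ Finset.Ico (i + 1) n, g (b j) (b n)) *
      ((∏ j ∈ Finset.Ico k (i + 1), f (xs j) (b k)) /
        ∏ j ∈ Finset.Icc (k + 1) (i + 1), g (b j) (b k)) * g (b k) (b n)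
      = fgE f g b xs n k (i + 1) - fgE f g b xs n k i := by
  unfold fgE
  have key : f (xs (i+1)) (b (i+1)) * g (b k) (b n) =
      f (xs (i+1)) (b k) * g (b (i+1)) (b n) -
        f (xs (i+1)) (b n) * g (b (i+1)) (b k) := by
    linear_combination -hfg (b k) (b (i+1)) (b n) (xs (i+1)) +
      f (xs (i+1)) (b (i+1)) * hganti (b n) (b k) +
      f (xs (i+1)) (b n) * hganti (b k) (b (i+1))
  have hQ : ∀ i, (∏ j ∈ Finset.Ico i n, g (b j) (b n)) ≠ 0 := fun i =>
    Finset.prod_ne_zero_iff.mpr (fun j hj => hg j n (by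
      rw [Finset.mem_Ico] at hj; omega))
  have hS : ∀ i, (∏ j ∈ Finset.Icc (k + 1) i, g (b j) (b k)) ≠ 0 := fun i =>
    Finset.prod_ne_zero_iff.mpr (fun j hj => hg j k (by
      rw [Finset.mem_Icc] at hj; omega))
  have p1 : (∏ j ∈ Finset.Ico i n, g (b j) (b n)) =
      g (b i) (b n) * ∏ j ∈ Finset.Ico (i+1) n, g (b j) (b n) :=
    Finset.prod_eq_prod_Ico_succ_bot hin _
  have p2 : (∏ j ∈ Finset.Icc (i+1) n, f (xs j) (b n)) =
      f (xs (i+1)) (b n) * ∏ j ∈ Finset.Icc (i+1+1) n, f (xs j) (b n) := by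
    rw [← Finset.Ico_add_one_right_eq_Icc, ← Finset.Ico_add_one_right_eq_Icc,
      Finset.prod_eq_prod_Ico_succ_bot (by omega)]
  have p3 : (∏ j ∈ Finset.Ico k (i+1), f (xs j) (b k)) =
      (∏ j ∈ Finset.Ico k i, f (xs j) (b k)) * f (xs i) (b k) :=
    Finset.prod_Ico_succ_top hki _
  have p4 : (∏ j ∈ Finset.Icc (k+1) (i+1), g (b j) (b k)) =
      (∏ j ∈ Finset.Icc (k+1) i, g (b j) (b k)) * g (b (i+1)) (b k) :=
    Finset.prod_Icc_succ_top (by omega) _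
  have hfn := hf n
  have hq' := hQ (i+1)
  have hs' := hS i
  have hgin : g (b i) (b n) ≠ 0 := hg i n (by omega)
  have hgik : g (b (i+1)) (b k) ≠ 0 := hg (i+1) k (by omega)
  rw [p1, p2, p3, p4]
  generalize (∏ j ∈ Finset.Icc (i+1+1) n, f (xs j) (b n)) = P at *
  generalize (∏ j ∈ Finset.Ico (i+1) n, g (b j) (b n)) = Q at *
  generalize (∏ j ∈ Finset.Ico k i, f (xs j) (b k)) = R at *
  generalize (∏ j ∈ Finset.Icc (k+1) i, g (b j) (b k)) = S at *
  field_simp [hfn, hq', hs', hgin, hgik]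
  linear_combination (P * R * f (xs i) (b k)) * key

theorem fg_matrix_inversion (f g : ℂ → ℂ → ℂ)
    (hganti : ∀ x y, g x y = - g y x)
    (hfg : ∀ a b c x, f x a * g b c + f x b * g c a + f x c * g a b = 0)
    (b xs : ℕ → ℂ)
    (hg : ∀ i j, i ≠ j → g (b i) (b j) ≠ 0)
    (hf : ∀ n, f (xs n) (b n) ≠ 0)
    (n k : ℕ) (hkn : k ≤ n) :
    (∑ i ∈ Finset.Icc k n,
        (f (xs i) (b i) / f (xs n) (b n) *
            (∏ j ∈ Finset.Icc (i + 1) n, f (xs j) (b n)) /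
            ∏ j ∈ Finset.Ico i n, g (b j) (b n)) *
          ((∏ j ∈ Finset.Ico k i, f (xs j) (b k)) /
            ∏ j ∈ Finset.Icc (k + 1) i, g (b j) (b k))) =
      if n = k then 1 else 0 := by
  have hgself : ∀ i, g (b i) (b i) = 0 := fun i => by
    linear_combination (1/2 : ℂ) * hganti (b i) (b i)
  rcases eq_or_lt_of_le hkn with h | hlt
  · subst h
    rw [Finset.Icc_self, Finset.sum_singleton, if_pos rfl]
    simp [Finset.Ico_self, Finset.Icc_eq_empty (show ¬ k + 1 ≤ k by omega), div_self (hf k)]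
  · rw [if_neg (by omega)]
    have hgkn : g (b k) (b n) ≠ 0 := hg k n (by omega)
    have hsum : (∑ i ∈ Finset.Icc k n,
        (f (xs i) (b i) / f (xs n) (b n) *
            (∏ j ∈ Finset.Icc (i + 1) n, f (xs j) (b n)) /
            ∏ j ∈ Finset.Ico i n, g (b j) (b n)) *
          ((∏ j ∈ Finset.Ico k i, f (xs j) (b k)) /
            ∏ j ∈ Finset.Icc (k + 1) i, g (b j) (b k))) * g (b k) (b n) = 0 := by
      rw [Finset.sum_mul,
        show Finset.Icc k n = insert k (Finset.Icc (k+1) n) by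
          rw [Finset.Icc_add_one_left_eq_Ioc, Finset.Ioc_insert_left hkn],
        Finset.sum_insert (by simp)]
      have base : (f (xs k) (b k) / f (xs n) (b n) *
            (∏ j ∈ Finset.Icc (k + 1) n, f (xs j) (b n)) /
            ∏ j ∈ Finset.Ico k n, g (b j) (b n)) *
          ((∏ j ∈ Finset.Ico k k, f (xs j) (b k)) /
            ∏ j ∈ Finset.Icc (k + 1) k, g (b j) (b k)) * g (b k) (b n)
          = fgE f g b xs n k k := by
        unfold fgE
        rw [Finset.Ico_self, Finset.Icc_eq_empty (show ¬ k + 1 ≤ k by omega),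
          Finset.prod_empty, Finset.prod_empty]
        ring
      rw [base, ← Finset.Ico_add_one_right_eq_Icc, Finset.sum_Ico_eq_sum_range,
        show n + 1 - (k + 1) = n - k by omega]
      have tele : ∀ j ∈ Finset.range (n - k),
          (f (xs (k + 1 + j)) (b (k + 1 + j)) / f (xs n) (b n) *
            (∏ l ∈ Finset.Icc (k + 1 + j + 1) n, f (xs l) (b n)) /
            ∏ l ∈ Finset.Ico (k + 1 + j) n, g (b l) (b n)) *
          ((∏ l ∈ Finset.Ico k (k + 1 + j), f (xs l) (b k)) /
            ∏ l ∈ Finset.Icc (k + 1) (k + 1 + j), g (b l) (b k)) * g (b k) (b n)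
          = fgE f g b xs n k (k + (j + 1)) - fgE f g b xs n k (k + j) := by
        intro j hj
        rw [Finset.mem_range] at hj
        have := fg_step f g hganti hfg b xs hg hf n k (k + j) (by omega) (by omega)
        rw [show k + 1 + j = k + j + 1 by omega, show k + (j + 1) = k + j + 1 by omega]
        exact this
      rw [Finset.sum_congr rfl tele,
        Finset.sum_range_sub (fun j => fgE f g b xs n k (k + j)) (n - k),
        show k + (n - k) = n by omega, Nat.add_zero]
      have hEn : fgE f g b xs n k n = 0 := by
        unfold fgE
        rw [hgself n]
        ring
      rw [hEn]
      ring
    exact (mul_eq_zero.mp hsum).resolve_right hgkn
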